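/- Let G = (C, S, E) be a finite bipartite graph with client weights w : C → ℤ>0, and let z : E → ℝ≥0 be a fractional assignment, i.e., z(δ(c)) = 1 for every client c ∈ C. Then there exists an assignment A ⊆ {e ∈ E : z(e) > 0} (a set of edges containing exactly one edge incident to each client) such that for every real p ≥ 1, ∥L_A∥_p ≤ ∥L_z∥_p + ∥w∥_p, where L_A(s) = ∑_{c : cs ∈ A} w(c), L_z(s) = ∑_{c : cs ∈ E} w(c)·z(cs), ∥v∥_p = (∑_{s∈S} v(s)^p)^{1/p} for v : S → ℝ≥0, and ∥w∥_p = (∑_{c∈C} w(c)^p)^{1/p}. -/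

import Mathlib

open Finset

set_option linter.unusedSectionVars false

namespace Stmt14

variable {C S : Type*} [Fintype C] [Fintype S] [DecidableEq C] [DecidableEq S]

/-- server load of a fractional assignment -/
noncomputable def sload (E : Finset (C × S)) (w : C → ℤ) (y : C × S → ℝ) (s : S) : ℝ :=
  ∑ e ∈ E.filter (fun e => e.2 = s), (w e.1 : ℝ) * y e

/-- the set of fractional edges -/
noncomputable def frE (E : Finset (C × S)) (y : C × S → ℝ) : Finset (C × S) :=
  E.filter (fun e => 0 < y e ∧ y e < 1)

/-- fractional neighbours of a client -/
noncomputable def nbr (E : Finset (C × S)) (y : C × S → ℝ) (c : C) : Finset S :=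
  ((frE E y).filter (fun e => e.1 = c)).image Prod.snd

/-- the invariant maintained: `y` is a fractional assignment supported inside the
support of `z` whose loads are dominated by those of `z`. -/
structure Good (E : Finset (C × S)) (w : C → ℤ) (z y : C × S → ℝ) : Prop where
  nonneg : ∀ e, 0 ≤ y e
  marg : ∀ c, ∑ e ∈ E.filter (fun e => e.1 = c), y e = 1
  supp : ∀ e ∈ E, 0 < y e → 0 < z e
  load : ∀ s, sload E w y s ≤ sload E w z s

theorem le_one_of_good {E : Finset (C × S)} {w : C → ℤ} {z y : C × S → ℝ}
    (hy : Good E w z y) {e : C × S} (he : e ∈ E) : y e ≤ 1 := by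
  have := hy.marg e.1
  calc y e ≤ ∑ e' ∈ E.filter (fun e' => e'.1 = e.1), y e' := by
        apply Finset.single_le_sum (fun i _ => hy.nonneg i)
        simp [he]
    _ = 1 := this

/-- a fractional client has at least two fractional edges -/
theorem two_frac_edges {E : Finset (C × S)} {w : C → ℤ} {z y : C × S → ℝ}
    (hy : Good E w z y) {c : C} (hc : (nbr E y c).Nonempty) :
    2 ≤ (((frE E y).filter (fun e => e.1 = c)).card) := by
  obtain ⟨s, hs⟩ := hc
  rw [nbr, Finset.mem_image] at hs
  obtain ⟨e1, he1, -⟩ := hs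
  show 1 < _
  rw [Finset.one_lt_card]
  by_contra h
  push_neg at h
  -- every other edge of `c` is integral (0 or ≥ 1)
  have hmarg := hy.marg c
  have he1E : e1 ∈ E ∧ (0 < y e1 ∧ y e1 < 1) ∧ e1.1 = c := by
    simp only [frE, Finset.mem_filter] at he1; tauto
  have hsplit : ∑ e ∈ E.filter (fun e => e.1 = c), y e
      = y e1 + ∑ e ∈ (E.filter (fun e => e.1 = c)).erase e1, y e := by
    rw [Finset.add_sum_erase]
    simp [he1E.1, he1E.2.2]
  have hrest : ∑ e ∈ (E.filter (fun e => e.1 = c)).erase e1, y e = 1 - y e1 := by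
    linarith [hmarg, hsplit]
  have hpos : 0 < ∑ e ∈ (E.filter (fun e => e.1 = c)).erase e1, y e := by
    rw [hrest]; linarith [he1E.2.1.2]
  obtain ⟨e2, he2, he2pos⟩ : ∃ e2 ∈ (E.filter (fun e => e.1 = c)).erase e1, 0 < y e2 := by
    by_contra hno
    push_neg at hno
    have : ∑ e ∈ (E.filter (fun e => e.1 = c)).erase e1, y e ≤ 0 :=
      Finset.sum_nonpos hno
    linarith
  have he2' : e2 ∈ E ∧ e2.1 = c ∧ e2 ≠ e1 := by
    simp only [Finset.mem_erase, Finset.mem_filter] at he2; tauto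
  -- e2 is not fractional (else contradiction with `h`), so y e2 = 1
  have he2nf : ¬ (y e2 < 1) := by
    intro hlt
    have : e2 ∈ (frE E y).filter (fun e => e.1 = c) := by
      simp [frE, Finset.mem_filter, he2'.1, he2'.2.1, he2pos, hlt]
    exact he2'.2.2 (h e2 this e1 he1)
  push_neg at he2nf
  have : y e1 + y e2 ≤ ∑ e ∈ E.filter (fun e => e.1 = c), y e := by
    rw [hsplit]
    have : y e2 ≤ ∑ e ∈ (E.filter (fun e => e.1 = c)).erase e1, y e :=
      Finset.single_le_sum (fun i _ => hy.nonneg i) he2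
    linarith
  rw [hmarg] at this
  linarith [he1E.2.1.1]

theorem sum_outer {v : C × S → ℝ} {F E : Finset (C × S)} (hFE : F ⊆ E)
    (hv : ∀ e ∉ F, v e = 0) (P : C × S → Prop) [DecidablePred P] :
    ∑ e ∈ E.filter P, v e = ∑ e ∈ F.attach, (if P e.val then v e.val else 0) := by
  rw [Finset.sum_attach F (fun e => if P e then v e else 0), ← Finset.sum_filter]
  apply (Finset.sum_subset (Finset.filter_subset_filter P hFE) _).symm
  intro x hx hnx
  rcases Finset.mem_filter.mp hx with ⟨-, hPx⟩
  by_cases hxF : x ∈ F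
  · exact absurd (Finset.mem_filter.mpr ⟨hxF, hPx⟩) hnx
  · exact hv x hxF

theorem improve {E : Finset (C × S)} {w : C → ℤ} (hw : ∀ c, 0 < w c) {z y : C × S → ℝ}
    (hy : Good E w z y) {T : Finset C} (hT : ∀ c ∈ T, (nbr E y c).Nonempty)
    (hhall : (T.biUnion (nbr E y)).card < T.card) :
    ∃ y', Good E w z y' ∧ (frE E y').card < (frE E y).card := by
  classical
  set N : Finset S := T.biUnion (nbr E y) with hN
  set F : Finset (C × S) := (frE E y).filter (fun e => e.1 ∈ T) with hF
  have hFfr : F ⊆ frE E y := Finset.filter_subset _ _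
  have hfrE : frE E y ⊆ E := Finset.filter_subset _ _
  have hFE : F ⊆ E := hFfr.trans hfrE
  have hmemF : ∀ e ∈ F, (0 < y e ∧ y e < 1) ∧ e.1 ∈ T := by
    intro e he
    rcases Finset.mem_filter.mp he with ⟨he1, he2⟩
    rcases Finset.mem_filter.mp he1 with ⟨-, h3⟩
    exact ⟨h3, he2⟩
  have hFN : ∀ e ∈ F, e.2 ∈ N := by
    intro e he
    rcases Finset.mem_filter.mp he with ⟨he1, he2⟩
    refine Finset.mem_biUnion.mpr ⟨e.1, he2, ?_⟩
    exact Finset.mem_image.mpr ⟨e, Finset.mem_filter.mpr ⟨he1, rfl⟩, rfl⟩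
  -- F has at least 2 |T| elements
  have hFcard : 2 * T.card ≤ F.card := by
    have hFeq : F = T.biUnion (fun c => (frE E y).filter (fun e => e.1 = c)) := by
      ext e
      simp only [hF, Finset.mem_filter, Finset.mem_biUnion]
      constructor
      · rintro ⟨h1, h2⟩; exact ⟨e.1, h2, h1, rfl⟩
      · rintro ⟨c, hc, h1, rfl⟩; exact ⟨h1, hc⟩
    have hdisj : ∀ c1 ∈ T, ∀ c2 ∈ T, c1 ≠ c2 →
        Disjoint ((frE E y).filter (fun e => e.1 = c1)) ((frE E y).filter (fun e => e.1 = c2)) := by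
      intro c1 _ c2 _ hne
      refine Finset.disjoint_left.mpr ?_
      intro e he1 he2
      rcases Finset.mem_filter.mp he1 with ⟨-, rfl⟩
      rcases Finset.mem_filter.mp he2 with ⟨-, h⟩
      exact hne h
    rw [hFeq, Finset.card_biUnion hdisj]
    calc 2 * T.card = ∑ _c ∈ T, 2 := by rw [Finset.sum_const, smul_eq_mul, mul_comm]
      _ ≤ ∑ c ∈ T, ((frE E y).filter (fun e => e.1 = c)).card := by
          apply Finset.sum_le_sum
          intro c hc
          exact two_frac_edges hy (hT c hc)
  -- the linear map recording client-marginals and server-loads of a perturbation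
  let Φ : (↥F → ℝ) →ₗ[ℝ] ((↥T → ℝ) × (↥N → ℝ)) :=
    (LinearMap.pi fun c : ↥T => ∑ e ∈ F.attach,
        (if (e : C × S).1 = (c : C) then (1:ℝ) else 0) • LinearMap.proj e).prod
    (LinearMap.pi fun s : ↥N => ∑ e ∈ F.attach,
        (if (e : C × S).2 = (s : S) then ((w (e : C × S).1 : ℝ)) else 0) • LinearMap.proj e)
  have hΦfst : ∀ (g : ↥F → ℝ) (c : ↥T),
      (Φ g).1 c = ∑ e ∈ F.attach, (if (e : C × S).1 = (c : C) then g e else 0) := by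
    intro g c
    simp only [Φ, LinearMap.prod_apply, Function.prod, LinearMap.pi_apply, LinearMap.coe_sum,
      Finset.sum_apply, LinearMap.smul_apply, LinearMap.proj_apply, ite_smul, zero_smul,
      smul_eq_mul, one_mul]
    exact Finset.sum_congr rfl fun d _ => by split_ifs <;> simp
  have hΦsnd : ∀ (g : ↥F → ℝ) (s : ↥N),
      (Φ g).2 s = ∑ e ∈ F.attach,
        (if (e : C × S).2 = (s : S) then (w (e : C × S).1 : ℝ) * g e else 0) := by
    intro g s
    simp only [Φ, LinearMap.prod_apply, Function.prod, LinearMap.pi_apply, LinearMap.coe_sum,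
      Finset.sum_apply, LinearMap.smul_apply, LinearMap.proj_apply, ite_smul, zero_smul,
      smul_eq_mul]
    exact Finset.sum_congr rfl fun d _ => by split_ifs <;> simp
  have hnotinj : ¬ Function.Injective Φ := by
    intro hinj
    have hle := LinearMap.finrank_le_finrank_of_injective hinj
    rw [Module.finrank_fintype_fun_eq_card, Module.finrank_prod,
      Module.finrank_fintype_fun_eq_card, Module.finrank_fintype_fun_eq_card,
      Fintype.card_coe, Fintype.card_coe, Fintype.card_coe] at hle
    omega
  rw [Function.not_injective_iff] at hnotinj
  obtain ⟨a, b, hab, hne⟩ := hnotinj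
  set g0 : ↥F → ℝ := a - b with hg0def
  have hΦ0 : Φ g0 = 0 := by rw [hg0def, map_sub, hab, sub_self]
  have hg0 : g0 ≠ 0 := sub_ne_zero_of_ne hne
  -- the perturbation direction as a function on all edges
  set gh : C × S → ℝ := fun e => if h : e ∈ F then g0 ⟨e, h⟩ else 0 with hghdef
  have hgh0 : ∀ e ∉ F, gh e = 0 := by intro e he; simp only [hghdef, dif_neg he]
  have hghF : ∀ (e : ↥F), gh e.val = g0 e := by
    intro e; simp only [hghdef, dif_pos e.prop]
  have hΦ1 : ∀ c : ↥T, ∑ e ∈ F.attach, (if (e : C × S).1 = (c : C) then g0 e else 0) = 0 := by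
    intro c
    rw [← hΦfst g0 c, hΦ0]
    rfl
  have hΦ2 : ∀ s : ↥N, ∑ e ∈ F.attach,
      (if (e : C × S).2 = (s : S) then (w (e : C × S).1 : ℝ) * g0 e else 0) = 0 := by
    intro s
    rw [← hΦsnd g0 s, hΦ0]
    rfl
  -- marginals of gh vanish
  have hmarg : ∀ c, ∑ e ∈ E.filter (fun e => e.1 = c), gh e = 0 := by
    intro c
    by_cases hc : c ∈ T
    · rw [sum_outer hFE hgh0 (fun e => e.1 = c)]
      refine Eq.trans (Finset.sum_congr rfl fun e _ => ?_) (hΦ1 ⟨c, hc⟩)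
      rw [hghF e]
    · apply Finset.sum_eq_zero
      intro e he
      rcases Finset.mem_filter.mp he with ⟨-, rfl⟩
      apply hgh0
      intro heF
      exact hc (hmemF e heF).2
  -- loads of gh vanish
  have hload : ∀ s, ∑ e ∈ E.filter (fun e => e.2 = s), (w e.1 : ℝ) * gh e = 0 := by
    intro s
    by_cases hs : s ∈ N
    · rw [sum_outer hFE (v := fun e => (w e.1 : ℝ) * gh e)
        (fun e he2z => by show (w e.1 : ℝ) * gh e = 0; rw [hgh0 e he2z, mul_zero])
        (fun e => e.2 = s)]
      refine Eq.trans (Finset.sum_congr rfl fun e _ => ?_) (hΦ2 ⟨s, hs⟩)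
      rw [hghF e]
    · apply Finset.sum_eq_zero
      intro e he
      rcases Finset.mem_filter.mp he with ⟨-, rfl⟩
      rw [hgh0, mul_zero]
      intro heF
      exact hs (hFN e heF)
  -- the set where gh is nonzero
  set Sg : Finset (C × S) := F.filter (fun e => gh e ≠ 0) with hSgdef
  have hSg0 : ∀ e ∉ Sg, gh e = 0 := by
    intro e he
    by_cases heF : e ∈ F
    · by_contra h
      exact he (Finset.mem_filter.mpr ⟨heF, h⟩)
    · exact hgh0 e heF
  have hSgne : Sg.Nonempty := by
    have : ∃ i : ↥F, g0 i ≠ 0 := by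
      by_contra h
      push_neg at h
      exact hg0 (funext fun i => h i)
    obtain ⟨i, hi⟩ := this
    exact ⟨i.val, Finset.mem_filter.mpr ⟨i.prop, by rw [hghF i]; exact hi⟩⟩
  have hSgF : Sg ⊆ F := Finset.filter_subset _ _
  -- step size
  set rfun : C × S → ℝ := fun e => if 0 < gh e then (1 - y e) / gh e else y e / (-gh e)
    with hrfundef
  have hrpos : ∀ e ∈ Sg, 0 < rfun e := by
    intro e he
    rcases Finset.mem_filter.mp he with ⟨heF, hgne⟩
    rcases hmemF e heF with ⟨⟨hy0, hy1⟩, -⟩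
    rcases lt_or_gt_of_ne hgne with hneg | hpos
    · rw [hrfundef]
      simp only [not_lt.mpr hneg.le, if_neg (not_lt.mpr hneg.le)]
      exact div_pos hy0 (by linarith)
    · rw [hrfundef]
      simp only [if_pos hpos]
      exact div_pos (by linarith) hpos
  set t0 : ℝ := (Sg.image rfun).min' (hSgne.image rfun) with ht0def
  obtain ⟨estar, hestar, hestart⟩ : ∃ e ∈ Sg, rfun e = t0 := by
    have := Finset.min'_mem (Sg.image rfun) (hSgne.image rfun)
    rcases Finset.mem_image.mp this with ⟨e, he, heq⟩
    exact ⟨e, he, heq⟩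
  have ht0pos : 0 < t0 := by rw [← hestart]; exact hrpos estar hestar
  have ht0le : ∀ e ∈ Sg, t0 ≤ rfun e := by
    intro e he
    exact Finset.min'_le _ _ (Finset.mem_image_of_mem rfun he)
  -- bounds on the perturbed values
  have hB : ∀ e ∈ Sg, 0 ≤ y e + t0 * gh e ∧ y e + t0 * gh e ≤ 1 := by
    intro e he
    rcases Finset.mem_filter.mp he with ⟨heF, hgne⟩
    rcases hmemF e heF with ⟨⟨hy0, hy1⟩, -⟩
    have ht0r := ht0le e he
    rcases lt_or_gt_of_ne hgne with hneg | hpos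
    · have hr : rfun e = y e / (-gh e) := by
        rw [hrfundef]; simp only [if_neg (not_lt.mpr hneg.le)]
      rw [hr] at ht0r
      rw [le_div_iff₀ (by linarith : (0:ℝ) < -gh e)] at ht0r
      constructor
      · nlinarith
      · nlinarith
    · have hr : rfun e = (1 - y e) / gh e := by
        rw [hrfundef]; simp only [if_pos hpos]
      rw [hr] at ht0r
      rw [le_div_iff₀ hpos] at ht0r
      constructor
      · nlinarith
      · nlinarith
  refine ⟨fun e => y e + t0 * gh e, ⟨?_, ?_, ?_, ?_⟩, ?_⟩
  · -- nonneg
    intro e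
    by_cases he : e ∈ Sg
    · exact (hB e he).1
    · rw [hSg0 e he, mul_zero, add_zero]; exact hy.nonneg e
  · -- marginals
    intro c
    rw [Finset.sum_add_distrib, ← Finset.mul_sum, hmarg c, mul_zero, add_zero]
    exact hy.marg c
  · -- support
    intro e heE hpos
    by_cases he : e ∈ Sg
    · exact hy.supp e heE (hmemF e (hSgF he)).1.1
    · rw [hSg0 e he, mul_zero, add_zero] at hpos
      exact hy.supp e heE hpos
  · -- loads
    intro s
    have : sload E w (fun e => y e + t0 * gh e) s = sload E w y s := by
      rw [sload, sload]
      have : ∀ e : C × S, (w e.1 : ℝ) * (y e + t0 * gh e)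
          = (w e.1 : ℝ) * y e + t0 * ((w e.1 : ℝ) * gh e) := fun e => by ring
      simp only [this]
      rw [Finset.sum_add_distrib, ← Finset.mul_sum, hload s, mul_zero, add_zero]
    rw [this]
    exact hy.load s
  · -- the number of fractional edges decreases
    apply Finset.card_lt_card
    rw [Finset.ssubset_iff_of_subset]
    · refine ⟨estar, (hSgF.trans hFfr) hestar, ?_⟩
      intro hmem
      rcases Finset.mem_filter.mp hmem with ⟨-, h0, h1⟩
      change 0 < y estar + t0 * gh estar at h0
      change y estar + t0 * gh estar < 1 at h1
      rcases Finset.mem_filter.mp hestar with ⟨heF, hgne⟩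
      rcases hmemF estar heF with ⟨⟨hy0, hy1⟩, -⟩
      rcases lt_or_gt_of_ne hgne with hneg | hpos
      · have hr : rfun estar = y estar / (-gh estar) := by
          rw [hrfundef]; simp only [if_neg (not_lt.mpr hneg.le)]
        have hkey : y estar / -gh estar * gh estar = -y estar := by
          rw [div_mul_eq_mul_div, mul_div_assoc, div_neg, div_self hgne]
          ring
        have : y estar + t0 * gh estar = 0 := by
          rw [← hestart, hr, hkey]; ring
        rw [this] at h0
        exact lt_irrefl 0 h0
      · have hr : rfun estar = (1 - y estar) / gh estar := by
          rw [hrfundef]; simp only [if_pos hpos]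
        have : y estar + t0 * gh estar = 1 := by
          rw [← hestart, hr, div_mul_cancel₀ _ hgne]; ring
        rw [this] at h1
        exact lt_irrefl 1 h1
    · -- subset
      intro e he
      rcases Finset.mem_filter.mp he with ⟨heE, h0, h1⟩
      change 0 < y e + t0 * gh e at h0
      change y e + t0 * gh e < 1 at h1
      by_cases heSg : e ∈ Sg
      · exact (hSgF.trans hFfr) heSg
      · rw [hSg0 e heSg, mul_zero, add_zero] at h0 h1
        refine Finset.mem_filter.mpr ⟨heE, h0, h1⟩

theorem sum_two_le {E : Finset (C × S)} {w : C → ℤ} {z y : C × S → ℝ} (hy : Good E w z y)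
    {c : C} {e1 e2 : C × S} (h1 : e1 ∈ E) (h2 : e2 ∈ E) (hc1 : e1.1 = c) (hc2 : e2.1 = c)
    (hne : e1 ≠ e2) : y e1 + y e2 ≤ 1 := by
  rw [← hy.marg c, ← Finset.sum_pair hne]
  apply Finset.sum_le_sum_of_subset_of_nonneg
  · intro x hx
    rcases Finset.mem_insert.mp hx with rfl | hx
    · exact Finset.mem_filter.mpr ⟨h1, hc1⟩
    · rcases Finset.mem_singleton.mp hx with rfl
      exact Finset.mem_filter.mpr ⟨h2, hc2⟩
  · intro i _ _
    exact hy.nonneg i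

theorem nonfrac_unique {E : Finset (C × S)} {w : C → ℤ} {z y : C × S → ℝ} (hy : Good E w z y)
    {c : C} (hc : ¬(nbr E y c).Nonempty) :
    ∃! e, e ∈ E ∧ e.1 = c ∧ y e = 1 := by
  have hnofrac : ∀ e ∈ E, e.1 = c → ¬(0 < y e ∧ y e < 1) := by
    intro e heE hec hfr
    apply hc
    exact ⟨e.2, Finset.mem_image.mpr ⟨e, Finset.mem_filter.mpr
      ⟨Finset.mem_filter.mpr ⟨heE, hfr⟩, hec⟩, rfl⟩⟩
  have h01 : ∀ e ∈ E, e.1 = c → y e = 0 ∨ y e = 1 := by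
    intro e heE hec
    have h0 := hy.nonneg e
    have h1 := le_one_of_good hy heE
    rcases eq_or_lt_of_le h0 with heq | hlt
    · exact Or.inl heq.symm
    rcases eq_or_lt_of_le h1 with heq | hlt1
    · exact Or.inr heq
    · exact absurd ⟨hlt, hlt1⟩ (hnofrac e heE hec)
  obtain ⟨e, he, hepos⟩ : ∃ e ∈ E.filter (fun e => e.1 = c), 0 < y e := by
    by_contra hno
    push_neg at hno
    have : ∑ e ∈ E.filter (fun e => e.1 = c), y e ≤ 0 := Finset.sum_nonpos hno
    rw [hy.marg c] at this
    linarith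
  rcases Finset.mem_filter.mp he with ⟨heE, hec⟩
  have hey : y e = 1 := by
    rcases h01 e heE hec with h | h
    · rw [h] at hepos; exact absurd hepos (lt_irrefl 0)
    · exact h
  refine ⟨e, ⟨heE, hec, hey⟩, ?_⟩
  rintro e' ⟨he'E, he'c, he'y⟩
  by_contra hne
  have := sum_two_le hy he'E heE he'c hec hne
  rw [he'y, hey] at this
  linarith

theorem exists_good_hall (E : Finset (C × S)) (w : C → ℤ) (hw : ∀ c, 0 < w c)
    (z : C × S → ℝ) (hznn : ∀ e, 0 ≤ z e)
    (hzc : ∀ c, ∑ e ∈ E.filter (fun e => e.1 = c), z e = 1) :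
    ∃ y, Good E w z y ∧ ∀ T : Finset C, (∀ c ∈ T, (nbr E y c).Nonempty) →
      T.card ≤ (T.biUnion (nbr E y)).card := by
  classical
  have hzgood : Good E w z z := ⟨hznn, hzc, fun _ _ h => h, fun _ => le_refl _⟩
  have hexists : ∃ n, ∃ y, Good E w z y ∧ (frE E y).card = n := ⟨_, z, hzgood, rfl⟩
  obtain ⟨y, hyg, hycard⟩ := Nat.find_spec hexists
  refine ⟨y, hyg, ?_⟩
  intro T hT
  by_contra h
  push_neg at h
  obtain ⟨y', hy'g, hy'lt⟩ := improve hw hyg hT h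
  exact Nat.find_min hexists (m := (frE E y').card) (by omega) ⟨y', hy'g, rfl⟩

theorem main (E : Finset (C × S)) (w : C → ℤ) (hw : ∀ c, 0 < w c)
    (z : C × S → ℝ) (hznn : ∀ e, 0 ≤ z e)
    (hzc : ∀ c, ∑ e ∈ E.filter (fun e => e.1 = c), z e = 1) :
    ∃ A : Finset (C × S), A ⊆ E.filter (fun e => 0 < z e) ∧
      (∀ c : C, ∃! e, e ∈ A ∧ e.1 = c) ∧
      ∃ d : S → ℝ, (∀ s, 0 ≤ d s) ∧
        (∀ s, ∑ c ∈ Finset.univ.filter (fun c => (c, s) ∈ A), (w c : ℝ)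
          ≤ sload E w z s + d s) ∧
        ∀ p : ℝ, 0 < p → ∑ s : S, d s ^ p ≤ ∑ c : C, (w c : ℝ) ^ p := by
  classical
  obtain ⟨y, hyg, hhall⟩ := exists_good_hall E w hw z hznn hzc
  -- Hall's marriage theorem applied to the fractional clients
  let ι := {c : C // (nbr E y c).Nonempty}
  have hhall' : ∀ s : Finset ι, s.card ≤ (s.biUnion fun i => nbr E y i.val).card := by
    intro s
    have h1 : (s.image Subtype.val).card = s.card :=
      Finset.card_image_of_injective _ Subtype.val_injective
    have h2 : (s.image Subtype.val).biUnion (nbr E y) = s.biUnion fun i => nbr E y i.val :=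
      Finset.image_biUnion
    rw [← h1, ← h2]
    apply hhall
    intro c hc
    rcases Finset.mem_image.mp hc with ⟨i, _, rfl⟩
    exact i.prop
  obtain ⟨f, hfinj, hfmem⟩ :=
    (Finset.all_card_le_biUnion_card_iff_exists_injective (fun i : ι => nbr E y i.val)).mp hhall'
  -- each matched edge is a fractional edge
  have hfrac_edge : ∀ i : ι, ((i : C), f i) ∈ frE E y := by
    intro i
    rcases Finset.mem_image.mp (hfmem i) with ⟨e, he, hsnd⟩
    rcases Finset.mem_filter.mp he with ⟨hfr, hfst⟩
    have : ((i : C), f i) = e := Prod.ext_iff.mpr ⟨hfst.symm, hsnd.symm⟩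
    rw [this]
    exact hfr
  set A1 : Finset (C × S) := E.filter (fun e => y e = 1) with hA1
  set A2 : Finset (C × S) := Finset.univ.image (fun i : ι => ((i : C), f i)) with hA2
  refine ⟨A1 ∪ A2, ?_, ?_, ?_⟩
  · -- support
    intro e he
    rcases Finset.mem_union.mp he with h | h
    · rcases Finset.mem_filter.mp h with ⟨heE, hy1⟩
      exact Finset.mem_filter.mpr ⟨heE, hyg.supp e heE (by rw [hy1]; norm_num)⟩
    · rcases Finset.mem_image.mp h with ⟨i, -, rfl⟩
      have := hfrac_edge i
      rcases Finset.mem_filter.mp this with ⟨heE, h0, -⟩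
      exact Finset.mem_filter.mpr ⟨heE, hyg.supp _ heE h0⟩
  · -- assignment property
    intro c
    by_cases hc : (nbr E y c).Nonempty
    · refine ⟨(((⟨c, hc⟩ : ι) : C), f ⟨c, hc⟩), ⟨Finset.mem_union_right _
        (Finset.mem_image.mpr ⟨⟨c, hc⟩, Finset.mem_univ _, rfl⟩), rfl⟩, ?_⟩
      rintro e' ⟨he'A, he'c⟩
      rcases Finset.mem_union.mp he'A with h | h
      · exfalso
        rcases Finset.mem_filter.mp h with ⟨he'E, hy1'⟩
        -- c has a fractional edge e2
        obtain ⟨s2, hs2⟩ := hc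
        rcases Finset.mem_image.mp hs2 with ⟨e2, he2, -⟩
        rcases Finset.mem_filter.mp he2 with ⟨he2fr, he2c⟩
        rcases Finset.mem_filter.mp he2fr with ⟨he2E, h20, h21⟩
        have hne : e' ≠ e2 := by
          intro hh
          rw [hh] at hy1'
          rw [hy1'] at h21
          exact lt_irrefl 1 h21
        have := sum_two_le hyg he'E he2E he'c he2c hne
        rw [hy1'] at this
        linarith
      · rcases Finset.mem_image.mp h with ⟨i, -, hi⟩
        have hival : i.val = c := by rw [← he'c, ← hi]
        have : i = (⟨c, hc⟩ : ι) := Subtype.ext hival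
        rw [← hi, this]
    · obtain ⟨e, ⟨heE, hec, hy1e⟩, huniq⟩ := nonfrac_unique hyg hc
      refine ⟨e, ⟨Finset.mem_union_left _ (Finset.mem_filter.mpr ⟨heE, hy1e⟩), hec⟩, ?_⟩
      rintro e' ⟨he'A, he'c⟩
      rcases Finset.mem_union.mp he'A with h | h
      · rcases Finset.mem_filter.mp h with ⟨he'E, hy1'⟩
        exact huniq e' ⟨he'E, he'c, hy1'⟩
      · exfalso
        rcases Finset.mem_image.mp h with ⟨i, -, hi⟩
        apply hc
        have hival : i.val = c := by rw [← he'c, ← hi]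
        rw [← hival]
        exact i.prop
  · -- the extra-load vector
    refine ⟨fun s => ∑ i ∈ Finset.univ.filter (fun i : ι => f i = s), (w i.val : ℝ), ?_, ?_, ?_⟩
    · intro s
      apply Finset.sum_nonneg
      intro i _
      exact_mod_cast (hw i.val).le
    · -- per-server load bound
      intro s
      have hsplit : Finset.univ.filter (fun c => (c, s) ∈ A1 ∪ A2) =
          Finset.univ.filter (fun c => (c, s) ∈ A1) ∪ Finset.univ.filter (fun c => (c, s) ∈ A2) := by
        ext c
        simp only [Finset.mem_filter, Finset.mem_univ, true_and, Finset.mem_union]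
      have hdisj : Disjoint (Finset.univ.filter (fun c => (c, s) ∈ A1))
          (Finset.univ.filter (fun c => (c, s) ∈ A2)) := by
        rw [Finset.disjoint_left]
        intro c h1c h2c
        rcases Finset.mem_filter.mp h1c with ⟨-, h1c⟩
        rcases Finset.mem_filter.mp h2c with ⟨-, h2c⟩
        rcases Finset.mem_filter.mp h1c with ⟨hcsE, hcs1⟩
        rcases Finset.mem_image.mp h2c with ⟨i, -, hi⟩
        have hival : i.val = c := congrArg Prod.fst hi
        have hfis : f i = s := congrArg Prod.snd hi
        -- the fractional edge of i
        have hfr := hfrac_edge i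
        rcases Finset.mem_filter.mp hfr with ⟨hfE, hf0, hf1⟩
        by_cases heq : ((i : C), f i) = (c, s)
        · rw [heq] at hf1
          rw [hcs1] at hf1
          exact lt_irrefl 1 hf1
        · have := sum_two_le hyg hcsE hfE rfl hival (Ne.symm heq)
          rw [hcs1] at this
          linarith
      rw [hsplit, Finset.sum_union hdisj]
      -- first part is at most the fractional load of y
      have hA1le : ∑ c ∈ Finset.univ.filter (fun c => (c, s) ∈ A1), (w c : ℝ)
          ≤ sload E w y s := by
        have hbij : ∑ c ∈ Finset.univ.filter (fun c => (c, s) ∈ A1), (w c : ℝ)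
            = ∑ e ∈ (E.filter (fun e => e.2 = s)).filter (fun e => y e = 1), (w e.1 : ℝ) := by
          apply Finset.sum_bij' (fun c _ => ((c, s) : C × S)) (fun e _ => e.1)
          · intro c hc
            rcases Finset.mem_filter.mp hc with ⟨-, hc⟩
            rcases Finset.mem_filter.mp hc with ⟨hcE, hc1⟩
            exact Finset.mem_filter.mpr ⟨Finset.mem_filter.mpr ⟨hcE, rfl⟩, hc1⟩
          · intro e he
            rcases Finset.mem_filter.mp he with ⟨he1, he2⟩
            rcases Finset.mem_filter.mp he1 with ⟨heE, hes⟩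
            refine Finset.mem_filter.mpr ⟨Finset.mem_univ _, ?_⟩
            have : (e.1, s) = e := Prod.ext_iff.mpr ⟨rfl, hes.symm⟩
            rw [this]
            exact Finset.mem_filter.mpr ⟨heE, he2⟩
          · intro c _; rfl
          · intro e he
            rcases Finset.mem_filter.mp he with ⟨he1, -⟩
            rcases Finset.mem_filter.mp he1 with ⟨-, hes⟩
            exact Prod.ext_iff.mpr ⟨rfl, hes.symm⟩
          · intro c _; rfl
        rw [hbij, sload]
        calc ∑ e ∈ (E.filter (fun e => e.2 = s)).filter (fun e => y e = 1), (w e.1 : ℝ)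
            = ∑ e ∈ (E.filter (fun e => e.2 = s)).filter (fun e => y e = 1), (w e.1 : ℝ) * y e := by
              apply Finset.sum_congr rfl
              intro e he
              rcases Finset.mem_filter.mp he with ⟨-, h1⟩
              rw [h1, mul_one]
          _ ≤ ∑ e ∈ E.filter (fun e => e.2 = s), (w e.1 : ℝ) * y e := by
              apply Finset.sum_le_sum_of_subset_of_nonneg (Finset.filter_subset _ _)
              intro e he _
              exact mul_nonneg (by exact_mod_cast (hw e.1).le) (hyg.nonneg e)
      -- second part equals d s
      have hA2eq : ∑ c ∈ Finset.univ.filter (fun c => (c, s) ∈ A2), (w c : ℝ)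
          = ∑ i ∈ Finset.univ.filter (fun i : ι => f i = s), (w i.val : ℝ) := by
        have himg : Finset.univ.filter (fun c => (c, s) ∈ A2)
            = (Finset.univ.filter (fun i : ι => f i = s)).image Subtype.val := by
          ext c
          constructor
          · intro hcmem
            rcases Finset.mem_filter.mp hcmem with ⟨-, hcs⟩
            rcases Finset.mem_image.mp hcs with ⟨i, -, hi⟩
            exact Finset.mem_image.mpr ⟨i, Finset.mem_filter.mpr
              ⟨Finset.mem_univ _, congrArg Prod.snd hi⟩, congrArg Prod.fst hi⟩
          · intro hcmem
            rcases Finset.mem_image.mp hcmem with ⟨i, hifilt, hiv⟩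
            rcases Finset.mem_filter.mp hifilt with ⟨-, hfis⟩
            refine Finset.mem_filter.mpr ⟨Finset.mem_univ _, Finset.mem_image.mpr
              ⟨i, Finset.mem_univ _, ?_⟩⟩
            rw [hiv, hfis]
        rw [himg, Finset.sum_image (fun x _ x' _ h => Subtype.val_injective h)]
      rw [hA2eq]
      have hload := hyg.load s
      linarith [hA1le]
    · -- the p-th power sums of d are dominated by those of w
      intro p hp0
      have hpne : p ≠ 0 := ne_of_gt hp0
      have hkey : ∀ s : S, (∑ i ∈ Finset.univ.filter (fun i : ι => f i = s), (w i.val : ℝ)) ^ p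
          = ∑ i ∈ Finset.univ.filter (fun i : ι => f i = s), (w i.val : ℝ) ^ p := by
        intro s
        have hcard : (Finset.univ.filter (fun i : ι => f i = s)).card ≤ 1 := by
          rw [Finset.card_le_one]
          intro a ha b hb
          exact hfinj ((Finset.mem_filter.mp ha).2.trans (Finset.mem_filter.mp hb).2.symm)
        rcases Nat.le_one_iff_eq_zero_or_eq_one.mp hcard with h | h
        · rw [Finset.card_eq_zero] at h
          rw [h, Finset.sum_empty, Finset.sum_empty, Real.zero_rpow hpne]
        · rw [Finset.card_eq_one] at h
          obtain ⟨i, hi⟩ := h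
          rw [hi, Finset.sum_singleton, Finset.sum_singleton]
      calc ∑ s : S, (∑ i ∈ Finset.univ.filter (fun i : ι => f i = s), (w i.val : ℝ)) ^ p
          = ∑ s : S, ∑ i ∈ Finset.univ.filter (fun i : ι => f i = s), (w i.val : ℝ) ^ p :=
            Finset.sum_congr rfl fun s _ => hkey s
        _ = ∑ i : ι, (w i.val : ℝ) ^ p :=
            Finset.sum_fiberwise_of_maps_to (fun i _ => Finset.mem_univ (f i)) _
        _ = ∑ c ∈ Finset.univ.filter (fun c => (nbr E y c).Nonempty), (w c : ℝ) ^ p :=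
            (Finset.sum_subtype (Finset.univ.filter (fun c => (nbr E y c).Nonempty))
              (by intro x; simp) (fun c => (w c : ℝ) ^ p)).symm
        _ ≤ ∑ c : C, (w c : ℝ) ^ p := by
            apply Finset.sum_le_sum_of_subset_of_nonneg (Finset.filter_subset _ _)
            intro c _ _
            exact Real.rpow_nonneg (by exact_mod_cast (hw c).le) p

end Stmt14



/-- (Rounding, Lenstra–Shmoys–Tardos.) Every fractional assignment `z`
can be rounded to an integral assignment `A` supported on `supp(z)` with
`∥L_A∥_p ≤ ∥L_z∥_p + ∥w∥_p` for all real `p ≥ 1`. -/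
theorem stmt_14 {C S : Type*} [Fintype C] [Fintype S] [DecidableEq C] [DecidableEq S]
    (E : Finset (C × S)) (w : C → ℤ) (hw : ∀ c, 0 < w c)
    (z : C × S → ℝ) (hznn : ∀ e, 0 ≤ z e)
    (hzc : ∀ c : C, ∑ e ∈ E.filter (fun e => e.1 = c), z e = 1) :
    ∃ A : Finset (C × S),
      A ⊆ E.filter (fun e => 0 < z e) ∧
      (∀ c : C, ∃! e, e ∈ A ∧ e.1 = c) ∧
      ∀ p : ℝ, 1 ≤ p →
        (∑ s : S, (∑ c ∈ Finset.univ.filter (fun c => (c, s) ∈ A), (w c : ℝ)) ^ p) ^ (1 / p)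
          ≤ (∑ s : S, (∑ e ∈ E.filter (fun e => e.2 = s), (w e.1 : ℝ) * z e) ^ p) ^ (1 / p)
            + (∑ c : C, (w c : ℝ) ^ p) ^ (1 / p) := by
  classical
  obtain ⟨A, hsub, hassign, d, hdnn, hload, hdp⟩ := Stmt14.main E w hw z hznn hzc
  refine ⟨A, hsub, hassign, ?_⟩
  intro p hp
  have hp0 : (0:ℝ) < p := lt_of_lt_of_le one_pos hp
  have hwnn : ∀ c, (0:ℝ) ≤ (w c : ℝ) := fun c => by exact_mod_cast (hw c).le
  have hload' : ∀ s, ∑ c ∈ Finset.univ.filter (fun c => (c, s) ∈ A), (w c : ℝ)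
      ≤ (∑ e ∈ E.filter (fun e => e.2 = s), (w e.1 : ℝ) * z e) + d s := hload
  have hLznn : ∀ s, 0 ≤ ∑ e ∈ E.filter (fun e => e.2 = s), (w e.1 : ℝ) * z e := by
    intro s
    apply Finset.sum_nonneg
    intro e _
    exact mul_nonneg (hwnn e.1) (hznn e)
  have hLAnn : ∀ s, 0 ≤ ∑ c ∈ Finset.univ.filter (fun c => (c, s) ∈ A), (w c : ℝ) := by
    intro s
    apply Finset.sum_nonneg
    intro c _
    exact hwnn c
  have step1 : ∑ s : S, (∑ c ∈ Finset.univ.filter (fun c => (c, s) ∈ A), (w c : ℝ)) ^ p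
      ≤ ∑ s : S, ((∑ e ∈ E.filter (fun e => e.2 = s), (w e.1 : ℝ) * z e) + d s) ^ p := by
    apply Finset.sum_le_sum
    intro s _
    exact Real.rpow_le_rpow (hLAnn s) (hload' s) hp0.le
  have step2 : (∑ s : S, (∑ c ∈ Finset.univ.filter (fun c => (c, s) ∈ A), (w c : ℝ)) ^ p) ^ (1/p)
      ≤ (∑ s : S, ((∑ e ∈ E.filter (fun e => e.2 = s), (w e.1 : ℝ) * z e) + d s) ^ p) ^ (1/p) := by
    apply Real.rpow_le_rpow ?_ step1 (by positivity)
    apply Finset.sum_nonneg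
    intro s _
    exact Real.rpow_nonneg (hLAnn s) p
  have step3 := Real.Lp_add_le_of_nonneg (s := Finset.univ)
    (f := fun s : S => ∑ e ∈ E.filter (fun e => e.2 = s), (w e.1 : ℝ) * z e) (g := d) hp
    (fun s _ => hLznn s) (fun s _ => hdnn s)
  have step4 : (∑ s : S, d s ^ p) ^ (1/p) ≤ (∑ c : C, (w c : ℝ) ^ p) ^ (1/p) := by
    apply Real.rpow_le_rpow ?_ (hdp p hp0) (by positivity)
    apply Finset.sum_nonneg
    intro s _
    exact Real.rpow_nonneg (hdnn s) p
  calc (∑ s : S, (∑ c ∈ Finset.univ.filter (fun c => (c, s) ∈ A), (w c : ℝ)) ^ p) ^ (1/p)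
      ≤ (∑ s : S, ((∑ e ∈ E.filter (fun e => e.2 = s), (w e.1 : ℝ) * z e) + d s) ^ p) ^ (1/p) :=
        step2
    _ ≤ (∑ s : S, (∑ e ∈ E.filter (fun e => e.2 = s), (w e.1 : ℝ) * z e) ^ p) ^ (1/p)
        + (∑ s : S, d s ^ p) ^ (1/p) := step3
    _ ≤ (∑ s : S, (∑ e ∈ E.filter (fun e => e.2 = s), (w e.1 : ℝ) * z e) ^ p) ^ (1/p)
        + (∑ c : C, (w c : ℝ) ^ p) ^ (1/p) := add_le_add_right step4 _
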